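/- For every integer j, Σ_{0 ≤ i ≤ r−1, i ≡ j mod a} ϑ(i) = 0 and Σ_{0 ≤ i ≤ r−1, i ≡ j mod b} ϑ(i) = 0. (These are the vanishing conditions [(φ_k)_⋆(ϑ)](χ) ≡ 0 for k = 2, 3 of the key properties of ϑ.) -/

import Mathlib

open scoped BigOperators

/-- The stability parameter `ϑ` of Section 4.3 for the group of type `(1/r)(1,a,b)`
with `r = abc + a + b + 1`:
`ϑ(i) = -[0 ≤ i < b] - [i = a + b] + [r - b - 1 ≤ i ≤ r - 1]`. -/
def vth1 (a b r : ℕ) (i : ℕ) : ℤ :=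
  (if i < b then -1 else 0) + (if i = a + b then -1 else 0) +
    (if (r : ℤ) - b - 1 ≤ (i : ℤ) ∧ (i : ℤ) ≤ (r : ℤ) - 1 then 1 else 0)

lemma sum_boole' {s : Finset ℕ} {p : ℕ → Prop} [DecidablePred p] :
    (∑ i ∈ s, if p i then (-1 : ℤ) else 0) = -((s.filter p).card : ℤ) := by
  have h : (∑ i ∈ s, if p i then (-1:ℤ) else 0)
      = ∑ i ∈ s, -(if p i then (1:ℤ) else 0) :=
    Finset.sum_congr rfl fun i _ => by split <;> simp
  rw [h, Finset.sum_neg_distrib, Finset.sum_boole]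

lemma sum_decomp (a b c r : ℕ) (hr : r = a * b * c + a + b + 1)
    (p : ℕ → Prop) [DecidablePred p] :
    (∑ i ∈ (Finset.range r).filter p, vth1 a b r i)
      = (((Finset.Icc (a*b*c+a) (a*b*c+a+b)).filter p).card : ℤ)
        - (((Finset.range b).filter p).card : ℤ)
        - (if p (a+b) then 1 else 0) := by
  unfold vth1
  rw [Finset.sum_add_distrib, Finset.sum_add_distrib]
  have e1 : ((Finset.range r).filter p).filter (fun i => i < b)
      = (Finset.range b).filter p := by
    ext i
    simp only [Finset.mem_filter, Finset.mem_range]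
    constructor
    · rintro ⟨⟨_, h2⟩, h3⟩; exact ⟨h3, h2⟩
    · rintro ⟨h1, h2⟩; exact ⟨⟨by omega, h2⟩, h1⟩
  have h1 : (∑ i ∈ (Finset.range r).filter p, if i < b then (-1:ℤ) else 0)
      = -(((Finset.range b).filter p).card : ℤ) := by
    rw [sum_boole', e1]
  have h2 : (∑ i ∈ (Finset.range r).filter p, if i = a + b then (-1:ℤ) else 0)
      = -(if p (a+b) then (1:ℤ) else 0) := by
    rw [sum_boole']
    have e2 : (((Finset.range r).filter p).filter (fun i => i = a + b)).card
        = if p (a+b) then 1 else 0 := by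
      rw [Finset.filter_eq']
      have hm : a + b ∈ Finset.range r := by
        simp only [Finset.mem_range]; omega
      by_cases hp : p (a+b)
      · rw [if_pos (Finset.mem_filter.2 ⟨hm, hp⟩), if_pos hp, Finset.card_singleton]
      · rw [if_neg (fun h => hp ((Finset.mem_filter.1 h).2)), if_neg hp, Finset.card_empty]
    rw [e2]
    split <;> simp
  have e3 : ((Finset.range r).filter p).filter
        (fun i : ℕ => (r : ℤ) - b - 1 ≤ (i : ℤ) ∧ (i : ℤ) ≤ (r : ℤ) - 1)
      = (Finset.Icc (a*b*c+a) (a*b*c+a+b)).filter p := by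
    ext i
    simp only [Finset.mem_filter, Finset.mem_range, Finset.mem_Icc]
    constructor
    · rintro ⟨⟨hir, hp⟩, h3, h4⟩
      exact ⟨⟨by omega, by omega⟩, hp⟩
    · rintro ⟨⟨h3, h4⟩, hp⟩
      exact ⟨⟨by omega, hp⟩, by omega, by omega⟩
  have h3 : (∑ i ∈ (Finset.range r).filter p,
        if (r : ℤ) - b - 1 ≤ (i : ℤ) ∧ (i : ℤ) ≤ (r : ℤ) - 1 then (1:ℤ) else 0)
      = (((Finset.Icc (a*b*c+a) (a*b*c+a+b)).filter p).card : ℤ) := by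
    rw [Finset.sum_boole, e3]
  rw [h1, h2, h3]
  ring

lemma card_ins (a b : ℕ) (hab : a < b) (p : ℕ → Prop) [DecidablePred p] :
    ((insert (a+b) (Finset.range b)).filter p).card
      = ((Finset.range b).filter p).card + (if p (a+b) then 1 else 0) := by
  rw [Finset.filter_insert]
  split_ifs with h
  · rw [Finset.card_insert_of_notMem (fun hmem => by
      simp only [Finset.mem_filter, Finset.mem_range] at hmem; omega)]
  · rw [add_zero]

lemma card_a (a b c : ℕ) (ha : 0 < a) (hc : 0 < c) (hab : a < b) (j : ℤ) :
    ((insert (a+b) (Finset.range b)).filter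
        (fun i : ℕ => (i : ℤ) % (a : ℤ) = j % (a : ℤ))).card
      = ((Finset.Icc (a*b*c+a) (a*b*c+a+b)).filter
        (fun i : ℕ => (i : ℤ) % (a : ℤ) = j % (a : ℤ))).card := by
  apply Finset.card_bij (fun i _ => i + a*b*c + (if i < b then a else 0))
  · intro i hi
    simp only [Finset.mem_filter, Finset.mem_insert, Finset.mem_range] at hi
    obtain ⟨hmem, hcls⟩ := hi
    refine Finset.mem_filter.2 ⟨Finset.mem_Icc.2 ⟨?_, ?_⟩, ?_⟩
    · split_ifs <;> omega
    · split_ifs <;> omega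
    · by_cases hib : i < b
      · rw [if_pos hib]
        push_cast
        rw [show (i:ℤ) + ↑a*↑b*↑c + ↑a = ↑i + ↑a*(↑b*↑c+1) by ring,
          Int.add_mul_emod_self_left]
        exact hcls
      · rw [if_neg hib, add_zero]
        push_cast
        rw [show (i:ℤ) + ↑a*↑b*↑c = ↑i + ↑a*(↑b*↑c) by ring,
          Int.add_mul_emod_self_left]
        exact hcls
  · intro i1 h1 i2 h2 heq
    simp only [Finset.mem_filter, Finset.mem_insert, Finset.mem_range] at h1 h2
    split_ifs at heq <;> omega
  · intro i' hi'
    simp only [Finset.mem_filter, Finset.mem_Icc] at hi'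
    obtain ⟨⟨hlo, hhi⟩, hcls⟩ := hi'
    by_cases hcase : i' = a*b*c+a+b
    · refine ⟨a+b, Finset.mem_filter.2 ⟨Finset.mem_insert_self _ _, ?_⟩, ?_⟩
      · have : ((a:ℤ)+↑b) % ↑a = (i' : ℤ) % ↑a := by
          rw [hcase]; push_cast
          rw [show (a:ℤ)*↑b*↑c + ↑a + ↑b = (↑a+↑b) + ↑a*(↑b*↑c) by ring,
            Int.add_mul_emod_self_left]
        push_cast
        rw [this]; exact hcls
      · rw [if_neg (by omega)]; omega
    · refine ⟨i' - a*b*c - a, Finset.mem_filter.2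
        ⟨Finset.mem_insert_of_mem (Finset.mem_range.2 (by omega)), ?_⟩, ?_⟩
      · have hcast : (((i' - a*b*c - a : ℕ)) : ℤ) = (i' : ℤ) - ↑(a*b*c) - ↑a := by omega
        push_cast at hcast
        rw [hcast,
          show (i':ℤ) - ↑a*↑b*↑c - ↑a = ↑i' + ↑a * (-(↑b*↑c) - 1) by ring,
          Int.add_mul_emod_self_left]
        exact hcls
      · rw [if_pos (by omega)]; omega

lemma card_b (a b c : ℕ) (ha : 0 < a) (hc : 0 < c) (hab : a < b) (j : ℤ) :
    ((insert (a+b) (Finset.range b)).filter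
        (fun i : ℕ => (i : ℤ) % (b : ℤ) = j % (b : ℤ))).card
      = ((Finset.Icc (a*b*c+a) (a*b*c+a+b)).filter
        (fun i : ℕ => (i : ℤ) % (b : ℤ) = j % (b : ℤ))).card := by
  apply Finset.card_bij (fun i _ => i + a*b*c + (if i < a then b else 0))
  · intro i hi
    simp only [Finset.mem_filter, Finset.mem_insert, Finset.mem_range] at hi
    obtain ⟨hmem, hcls⟩ := hi
    refine Finset.mem_filter.2 ⟨Finset.mem_Icc.2 ⟨?_, ?_⟩, ?_⟩
    · split_ifs <;> omega
    · split_ifs <;> omega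
    · by_cases hib : i < a
      · rw [if_pos hib]
        push_cast
        rw [show (i:ℤ) + ↑a*↑b*↑c + ↑b = ↑i + ↑b*(↑a*↑c+1) by ring,
          Int.add_mul_emod_self_left]
        exact hcls
      · rw [if_neg hib, add_zero]
        push_cast
        rw [show (i:ℤ) + ↑a*↑b*↑c = ↑i + ↑b*(↑a*↑c) by ring,
          Int.add_mul_emod_self_left]
        exact hcls
  · intro i1 h1 i2 h2 heq
    simp only [Finset.mem_filter, Finset.mem_insert, Finset.mem_range] at h1 h2
    split_ifs at heq <;> omega
  · intro i' hi'
    simp only [Finset.mem_filter, Finset.mem_Icc] at hi'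
    obtain ⟨⟨hlo, hhi⟩, hcls⟩ := hi'
    by_cases hc1 : i' = a*b*c+a+b
    · refine ⟨a+b, Finset.mem_filter.2 ⟨Finset.mem_insert_self _ _, ?_⟩, ?_⟩
      · have : ((a:ℤ)+↑b) % ↑b = (i' : ℤ) % ↑b := by
          rw [hc1]; push_cast
          rw [show (a:ℤ)*↑b*↑c + ↑a + ↑b = (↑a+↑b) + ↑b*(↑a*↑c) by ring,
            Int.add_mul_emod_self_left]
        push_cast
        rw [this]; exact hcls
      · rw [if_neg (by omega)]; omega
    · by_cases hc2 : a*b*c + b ≤ i'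
      · refine ⟨i' - a*b*c - b, Finset.mem_filter.2
          ⟨Finset.mem_insert_of_mem (Finset.mem_range.2 (by omega)), ?_⟩, ?_⟩
        · have hcast : (((i' - a*b*c - b : ℕ)) : ℤ) = (i' : ℤ) - ↑(a*b*c) - ↑b := by omega
          push_cast at hcast
          rw [hcast,
            show (i':ℤ) - ↑a*↑b*↑c - ↑b = ↑i' + ↑b * (-(↑a*↑c) - 1) by ring,
            Int.add_mul_emod_self_left]
          exact hcls
        · rw [if_pos (by omega)]; omega
      · refine ⟨i' - a*b*c, Finset.mem_filter.2
          ⟨Finset.mem_insert_of_mem (Finset.mem_range.2 (by omega)), ?_⟩, ?_⟩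
        · have hcast : (((i' - a*b*c : ℕ)) : ℤ) = (i' : ℤ) - ↑(a*b*c) := by omega
          push_cast at hcast
          rw [hcast,
            show (i':ℤ) - ↑a*↑b*↑c = ↑i' + ↑b * (-(↑a*↑c)) by ring,
            Int.add_mul_emod_self_left]
          exact hcls
        · rw [if_neg (by omega)]; omega

/-- For every integer `j`, `∑_{0 ≤ i ≤ r-1, i ≡ j mod a} ϑ(i) = 0` and
`∑_{0 ≤ i ≤ r-1, i ≡ j mod b} ϑ(i) = 0`. -/
theorem stmt_12 (a b c : ℕ) (ha : 0 < a) (hb : 0 < b) (hc : 0 < c) (hab : a < b)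
    (r : ℕ) (hr : r = a * b * c + a + b + 1) (j : ℤ) :
    (∑ i ∈ (Finset.range r).filter (fun i : ℕ => (i : ℤ) % (a : ℤ) = j % (a : ℤ)),
        vth1 a b r i) = 0 ∧
    (∑ i ∈ (Finset.range r).filter (fun i : ℕ => (i : ℤ) % (b : ℤ) = j % (b : ℤ)),
        vth1 a b r i) = 0 := by
  constructor
  · rw [sum_decomp a b c r hr, ← card_a a b c ha hc hab j,
      card_ins a b hab]
    split_ifs <;> push_cast <;> ring
  · rw [sum_decomp a b c r hr, ← card_b a b c ha hc hab j,
      card_ins a b hab]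
    split_ifs <;> push_cast <;> ring
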